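/- There exists C > 0 such that for all η = (η₁,η₂,η₃) ∈ ℝ³ with η ≠ 0 and 3η₁² ≠ η₂²+η₃², and for each index pair (j,k) ∈ {(1,1),(1,2),(1,3),(2,1),(2,2),(3,1),(3,2)}: |B_{j,k}(η)| ≤ C (η₁²+η₂²+η₃²)(3η₁²−η₂²−η₃²)^{−2}, and |∂_{η_j}B_{j,k}(η)| ≤ C [ (η₁²+η₂²+η₃²)^{1/2}(3η₁²−η₂²−η₃²)^{−2} + (η₁²+η₂²+η₃²)^{3/2} |3η₁²−η₂²−η₃²|^{−3} ]. -/

import Mathlib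

noncomputable section

/-- p(η) = (η₁²+η₂²+η₃²)(3η₁²−η₂²−η₃²)². -/
def pZK (η₁ η₂ η₃ : ℝ) : ℝ :=
  (η₁ ^ 2 + η₂ ^ 2 + η₃ ^ 2) * (3 * η₁ ^ 2 - η₂ ^ 2 - η₃ ^ 2) ^ 2

def A0ZK (η₁ η₂ η₃ : ℝ) : ℝ :=
  (9 * η₁ ^ 4 + 30 * η₁ ^ 2 * (η₂ ^ 2 + η₃ ^ 2) + 5 * (η₂ ^ 2 + η₃ ^ 2) ^ 2)
    / (3 * pZK η₁ η₂ η₃)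

def A1ZK (η₁ η₂ η₃ : ℝ) : ℝ :=
  -(η₁ * (9 * η₁ ^ 4 + 18 * η₁ ^ 2 * (η₂ ^ 2 + η₃ ^ 2) + (η₂ ^ 2 + η₃ ^ 2) ^ 2))
    / (3 * pZK η₁ η₂ η₃)

def A2ZK (η₁ η₂ η₃ : ℝ) : ℝ :=
  -(4 * η₂ * (η₂ ^ 2 + η₃ ^ 2) * (3 * η₁ ^ 2 + η₂ ^ 2 + η₃ ^ 2)) / (3 * pZK η₁ η₂ η₃)

def A3ZK (η₁ η₂ η₃ : ℝ) : ℝ :=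
  -(4 * η₃ * (η₂ ^ 2 + η₃ ^ 2) * (3 * η₁ ^ 2 + η₂ ^ 2 + η₃ ^ 2)) / (3 * pZK η₁ η₂ η₃)

def B01ZK (η₁ η₂ η₃ : ℝ) : ℝ := -(4 * η₁ * (η₂ ^ 2 + η₃ ^ 2)) / pZK η₁ η₂ η₃

def B02ZK (η₁ η₂ η₃ : ℝ) : ℝ :=
  -(2 * η₂ * (3 * η₁ ^ 2 + η₂ ^ 2 + η₃ ^ 2)) / (3 * pZK η₁ η₂ η₃)

def B03ZK (η₁ η₂ η₃ : ℝ) : ℝ :=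
  -(2 * η₃ * (3 * η₁ ^ 2 + η₂ ^ 2 + η₃ ^ 2)) / (3 * pZK η₁ η₂ η₃)

def B11ZK (η₁ η₂ η₃ : ℝ) : ℝ := 4 * η₁ ^ 2 * (η₂ ^ 2 + η₃ ^ 2) / pZK η₁ η₂ η₃

def B12ZK (η₁ η₂ η₃ : ℝ) : ℝ :=
  2 * η₁ * η₂ * (3 * η₁ ^ 2 + η₂ ^ 2 + η₃ ^ 2) / (3 * pZK η₁ η₂ η₃)

def B13ZK (η₁ η₂ η₃ : ℝ) : ℝ :=
  2 * η₁ * η₃ * (3 * η₁ ^ 2 + η₂ ^ 2 + η₃ ^ 2) / (3 * pZK η₁ η₂ η₃)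

def B21ZK (η₁ η₂ η₃ : ℝ) : ℝ := 4 * η₁ * η₂ * (η₂ ^ 2 + η₃ ^ 2) / pZK η₁ η₂ η₃

def B31ZK (η₁ η₂ η₃ : ℝ) : ℝ := 4 * η₁ * η₃ * (η₂ ^ 2 + η₃ ^ 2) / pZK η₁ η₂ η₃

def B22ZK (η₁ η₂ η₃ : ℝ) : ℝ :=
  2 * (η₂ ^ 2 + η₃ ^ 2) * (3 * η₁ ^ 2 + η₂ ^ 2 + η₃ ^ 2) / (3 * pZK η₁ η₂ η₃)

def B32ZK (η₁ η₂ η₃ : ℝ) : ℝ :=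
  2 * (η₂ ^ 2 + η₃ ^ 2) * (3 * η₁ ^ 2 + η₂ ^ 2 + η₃ ^ 2) / (3 * pZK η₁ η₂ η₃)

def C21ZK (η₁ η₂ η₃ : ℝ) : ℝ :=
  -(2 * η₃ * (3 * η₁ ^ 2 + η₂ ^ 2 + η₃ ^ 2)) / (3 * pZK η₁ η₂ η₃)

def C31ZK (η₁ η₂ η₃ : ℝ) : ℝ :=
  -(2 * η₂ * (3 * η₁ ^ 2 + η₂ ^ 2 + η₃ ^ 2)) / (3 * pZK η₁ η₂ η₃)

def C22ZK (η₁ η₂ η₃ : ℝ) : ℝ :=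
  2 * η₂ * (3 * η₁ ^ 2 + η₂ ^ 2 + η₃ ^ 2) / (3 * pZK η₁ η₂ η₃)

def C32ZK (η₁ η₂ η₃ : ℝ) : ℝ :=
  2 * η₃ * (3 * η₁ ^ 2 + η₂ ^ 2 + η₃ ^ 2) / (3 * pZK η₁ η₂ η₃)

lemma prodb {a b A B : ℝ} (ha : |a| ≤ A) (hb : |b| ≤ B) : |a*b| ≤ A*B := by
  rw [abs_mul]
  exact mul_le_mul ha hb (abs_nonneg _) ((abs_nonneg a).trans ha)

lemma absc {c x q : ℝ} (hc : 0 ≤ c) (hx : |x| ≤ q) : |c*x| ≤ c*q := by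
  rw [abs_mul, abs_of_nonneg hc]; exact mul_le_mul_of_nonneg_left hx hc

lemma transfer {A P q dd : ℝ} (hq : 0 < q) (hd : 0 < dd)
    (hP : q^4 * dd^4 ≤ P) (hA : |A| ≤ 1000 * (q^5*dd^2 + q^7*dd)) :
    |A / P| ≤ 1000 * (q * (dd^2)⁻¹ + q^3 * (dd^3)⁻¹) := by
  have hP0 : 0 < P := lt_of_lt_of_le (by positivity) hP
  rw [abs_div, abs_of_pos hP0, div_le_iff₀ hP0]
  calc |A| ≤ 1000 * (q^5*dd^2 + q^7*dd) := hA
    _ = (1000 * (q * (dd^2)⁻¹ + q^3 * (dd^3)⁻¹)) * (q^4*dd^4) := by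
        field_simp
    _ ≤ _ := mul_le_mul_of_nonneg_left hP (by positivity)

lemma transfer0 {num P s d2 : ℝ} (hs : 0 < s) (hd2 : 0 < d2)
    (hP : s * d2 ≤ P) (hnum : |num| ≤ 1000 * s^2) :
    |num / P| ≤ 1000 * s * d2⁻¹ := by
  have hP0 : 0 < P := lt_of_lt_of_le (by positivity) hP
  rw [abs_div, abs_of_pos hP0, div_le_iff₀ hP0]
  calc |num| ≤ 1000 * s^2 := hnum
    _ = (1000*s*d2⁻¹)*(s*d2) := by field_simp
    _ ≤ _ := mul_le_mul_of_nonneg_left hP (by positivity)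

lemma derivX1 {a q dd : ℝ} (x : ℝ) (ha : 0 ≤ a) (hq : 0 < q) (hdd : 0 < dd)
    (hs : x^2 + a = q^2) (hd : |3*x^2 - a| = dd) :
    |deriv (fun t : ℝ => 4*t^2*a / ((t^2+a)*(3*t^2-a)^2)) x|
      ≤ 1000 * (q * (dd^2)⁻¹ + q^3 * (dd^3)⁻¹) := by
  have hx : |x| ≤ q := by nlinarith [sq_abs x, abs_nonneg x]
  have haq : |a| ≤ q^2 := by rw [abs_of_nonneg ha]; nlinarith [sq_nonneg x]
  have hdd2 : (3*x^2-a)^2 = dd^2 := by rw [← hd, sq_abs]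
  have hN : HasDerivAt (fun t : ℝ => 4*t^2*a) (8*x*a) x := by
    have := ((hasDerivAt_pow 2 x).const_mul 4).mul_const a
    exact this.congr_deriv (by push_cast; ring)
  have hD : HasDerivAt (fun t : ℝ => (t^2+a)*(3*t^2-a)^2)
      (2*x*(3*x^2-a)^2 + (x^2+a)*(12*x*(3*x^2-a))) x := by
    have h1 : HasDerivAt (fun t : ℝ => t^2+a) (2*x) x := by
      simpa using (hasDerivAt_pow 2 x).add_const a
    have h2 : HasDerivAt (fun t : ℝ => 3*t^2-a) (3*(2*x)) x := by
      simpa using ((hasDerivAt_pow 2 x).const_mul 3).sub_const a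
    have h3 : HasDerivAt (fun t : ℝ => (3*t^2-a)^2) (2*(3*x^2-a)^1*(3*(2*x))) x := by
      exact (h2.pow 2).congr_deriv (by push_cast; ring)
    have := h1.mul h3
    exact this.congr_deriv (by push_cast; ring)
  have hden : (x^2+a)*(3*x^2-a)^2 ≠ 0 := by
    have : (0:ℝ) < (x^2+a)*(3*x^2-a)^2 := by rw [hs, hdd2]; positivity
    exact this.ne'
  erw [(hN.div hD hden).deriv]
  apply transfer hq hdd
  · rw [hs, hdd2]; ring_nf; exact le_refl _
  · have hP1 : |(x^2+a)*(3*x^2-a)^2| ≤ q^2*dd^2 := by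
      rw [abs_mul, abs_of_nonneg (by positivity), abs_of_nonneg (sq_nonneg _), hs, hdd2]
    have hN1 : |8*x*a| ≤ 8*(q*q^2) := by
      rw [show (8:ℝ)*x*a = 8*(x*a) by ring]
      exact absc (by norm_num) (prodb hx haq)
    have hN0 : |4*x^2*a| ≤ 4*(q^2*q^2) := by
      rw [show (4:ℝ)*x^2*a = 4*(x^2*a) by ring]
      refine absc (by norm_num) (prodb ?_ haq)
      rw [abs_of_nonneg (sq_nonneg _)]; nlinarith [sq_nonneg x]
    have hxd : |x*(3*x^2-a)| ≤ q*dd := prodb hx (le_of_eq hd)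
    have hD' : |2*x*(3*x^2-a)^2 + (x^2+a)*(12*x*(3*x^2-a))|
        ≤ 2*(q*dd^2) + q^2*(12*(q*dd)) := by
      refine (abs_add_le _ _).trans (add_le_add ?_ ?_)
      · rw [show (2:ℝ)*x*(3*x^2-a)^2 = 2*(x*(3*x^2-a)^2) by ring]
        refine absc (by norm_num) (prodb hx ?_)
        rw [abs_of_nonneg (sq_nonneg _), hdd2]
      · refine prodb ?_ ?_
        · rw [abs_of_nonneg (by positivity), hs]
        · rw [show (12:ℝ)*x*(3*x^2-a) = 12*(x*(3*x^2-a)) by ring]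
          exact absc (by norm_num) hxd
    calc |8*x*a * ((x^2+a)*(3*x^2-a)^2)
          - 4*x^2*a * (2*x*(3*x^2-a)^2 + (x^2+a)*(12*x*(3*x^2-a)))|
        ≤ (8*(q*q^2))*(q^2*dd^2) + (4*(q^2*q^2))*(2*(q*dd^2) + q^2*(12*(q*dd))) :=
          (abs_sub _ _).trans (add_le_add (prodb hN1 hP1) (prodb hN0 hD'))
      _ ≤ 1000 * (q^5*dd^2 + q^7*dd) := by
          nlinarith [mul_nonneg (pow_nonneg hq.le 5) (pow_nonneg hdd.le 2),
            mul_nonneg (pow_nonneg hq.le 7) hdd.le]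

lemma derivX2 {a c q dd : ℝ} (x : ℝ) (ha : 0 ≤ a) (hq : 0 < q) (hdd : 0 < dd)
    (hs : x^2 + a = q^2) (hd : |3*x^2 - a| = dd) (hc : |c| ≤ q) :
    |deriv (fun t : ℝ => 2*c*(3*t^3+a*t) / (3*((t^2+a)*(3*t^2-a)^2))) x|
      ≤ 1000 * (q * (dd^2)⁻¹ + q^3 * (dd^3)⁻¹) := by
  have hx : |x| ≤ q := by nlinarith [sq_abs x, abs_nonneg x]
  have haq : |a| ≤ q^2 := by rw [abs_of_nonneg ha]; nlinarith [sq_nonneg x]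
  have hx2 : |x^2| ≤ q^2 := by rw [abs_of_nonneg (sq_nonneg _)]; nlinarith [sq_nonneg x]
  have hdd2 : (3*x^2-a)^2 = dd^2 := by rw [← hd, sq_abs]
  have hN : HasDerivAt (fun t : ℝ => 2*c*(3*t^3+a*t)) (2*c*(9*x^2+a*1)) x := by
    have h1 : HasDerivAt (fun t : ℝ => 3*t^3+a*t) (9*x^2+a*1) x := by
      have := ((hasDerivAt_pow 3 x).const_mul 3).add ((hasDerivAt_id x).const_mul a)
      exact this.congr_deriv (by push_cast; ring)
    exact h1.const_mul (2*c)
  have hD : HasDerivAt (fun t : ℝ => 3*((t^2+a)*(3*t^2-a)^2))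
      (3*(2*x*(3*x^2-a)^2 + (x^2+a)*(12*x*(3*x^2-a)))) x := by
    have h1 : HasDerivAt (fun t : ℝ => t^2+a) (2*x) x := by
      simpa using (hasDerivAt_pow 2 x).add_const a
    have h2 : HasDerivAt (fun t : ℝ => 3*t^2-a) (3*(2*x)) x := by
      simpa using ((hasDerivAt_pow 2 x).const_mul 3).sub_const a
    have h3 : HasDerivAt (fun t : ℝ => (3*t^2-a)^2) (2*(3*x^2-a)^1*(3*(2*x))) x := by
      exact (h2.pow 2).congr_deriv (by push_cast; ring)
    have := (h1.mul h3).const_mul 3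
    exact this.congr_deriv (by push_cast; ring)
  have hden : 3*((x^2+a)*(3*x^2-a)^2) ≠ 0 := by
    have : (0:ℝ) < 3*((x^2+a)*(3*x^2-a)^2) := by rw [hs, hdd2]; positivity
    exact this.ne'
  erw [(hN.div hD hden).deriv]
  apply transfer hq hdd
  · rw [hs, hdd2]; nlinarith [mul_nonneg (pow_nonneg hq.le 4) (pow_nonneg hdd.le 4)]
  · have hP1 : |3*((x^2+a)*(3*x^2-a)^2)| ≤ 3*(q^2*dd^2) := by
      refine absc (by norm_num) ?_
      rw [abs_mul, abs_of_nonneg (by positivity), abs_of_nonneg (sq_nonneg _), hs, hdd2]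
    have hN1 : |2*c*(9*x^2+a*1)| ≤ (2*q)*(10*q^2) := by
      refine prodb (absc (by norm_num) hc) ?_
      calc |9*x^2+a*1| ≤ |9*x^2| + |a*1| := abs_add_le _ _
        _ ≤ 9*q^2 + q^2*1 := add_le_add (absc (by norm_num) hx2) (prodb haq (by norm_num))
        _ = 10*q^2 := by ring
    have hN0 : |2*c*(3*x^3+a*x)| ≤ (2*q)*(4*(q^2*q)) := by
      refine prodb (absc (by norm_num) hc) ?_
      calc |3*x^3+a*x| ≤ |3*x^3| + |a*x| := abs_add_le _ _
        _ ≤ 3*(q^2*q) + q^2*q := add_le_add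
            (by rw [show (3:ℝ)*x^3 = 3*(x^2*x) by ring]
                exact absc (by norm_num) (prodb hx2 hx))
            (prodb haq hx)
        _ = 4*(q^2*q) := by ring
    have hxd : |x*(3*x^2-a)| ≤ q*dd := prodb hx (le_of_eq hd)
    have hD' : |3*(2*x*(3*x^2-a)^2 + (x^2+a)*(12*x*(3*x^2-a)))|
        ≤ 3*(2*(q*dd^2) + q^2*(12*(q*dd))) := by
      refine absc (by norm_num) ?_
      refine (abs_add_le _ _).trans (add_le_add ?_ ?_)
      · rw [show (2:ℝ)*x*(3*x^2-a)^2 = 2*(x*(3*x^2-a)^2) by ring]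
        refine absc (by norm_num) (prodb hx ?_)
        rw [abs_of_nonneg (sq_nonneg _), hdd2]
      · refine prodb ?_ ?_
        · rw [abs_of_nonneg (by positivity), hs]
        · rw [show (12:ℝ)*x*(3*x^2-a) = 12*(x*(3*x^2-a)) by ring]
          exact absc (by norm_num) hxd
    calc |2*c*(9*x^2+a*1) * (3*((x^2+a)*(3*x^2-a)^2))
          - 2*c*(3*x^3+a*x) * (3*(2*x*(3*x^2-a)^2 + (x^2+a)*(12*x*(3*x^2-a))))|
        ≤ ((2*q)*(10*q^2))*(3*(q^2*dd^2))
            + ((2*q)*(4*(q^2*q)))*(3*(2*(q*dd^2) + q^2*(12*(q*dd)))) :=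
          (abs_sub _ _).trans (add_le_add (prodb hN1 hP1) (prodb hN0 hD'))
      _ ≤ 1000 * (q^5*dd^2 + q^7*dd) := by
          nlinarith [mul_nonneg (pow_nonneg hq.le 5) (pow_nonneg hdd.le 2),
            mul_nonneg (pow_nonneg hq.le 7) hdd.le]

lemma derivY1 {e cc q dd : ℝ} (y : ℝ) (hcc : 0 ≤ cc) (hq : 0 < q) (hdd : 0 < dd)
    (hs : e^2 + y^2 + cc = q^2) (hd : |3*e^2 - y^2 - cc| = dd) :
    |deriv (fun t : ℝ => 4*e*(t^3+cc*t) / ((e^2+t^2+cc)*(3*e^2-t^2-cc)^2)) y|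
      ≤ 1000 * (q * (dd^2)⁻¹ + q^3 * (dd^3)⁻¹) := by
  have hy : |y| ≤ q := by nlinarith [sq_abs y, abs_nonneg y, sq_nonneg e]
  have he : |e| ≤ q := by nlinarith [sq_abs e, abs_nonneg e, sq_nonneg y]
  have hy2 : |y^2| ≤ q^2 := by
    rw [abs_of_nonneg (sq_nonneg _)]; nlinarith [sq_nonneg e]
  have hcq : |cc| ≤ q^2 := by
    rw [abs_of_nonneg hcc]; nlinarith [sq_nonneg e, sq_nonneg y]
  have hdd2 : (3*e^2-y^2-cc)^2 = dd^2 := by rw [← hd, sq_abs]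
  have hN : HasDerivAt (fun t : ℝ => 4*e*(t^3+cc*t)) (4*e*(3*y^2+cc*1)) y := by
    have h1 : HasDerivAt (fun t : ℝ => t^3+cc*t) (3*y^2+cc*1) y := by
      have := (hasDerivAt_pow 3 y).add ((hasDerivAt_id y).const_mul cc)
      exact this.congr_deriv (by push_cast; ring)
    exact h1.const_mul (4*e)
  have hD : HasDerivAt (fun t : ℝ => (e^2+t^2+cc)*(3*e^2-t^2-cc)^2)
      (2*y*(3*e^2-y^2-cc)^2 + (e^2+y^2+cc)*(2*(3*e^2-y^2-cc)*(-2*y))) y := by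
    have h1 : HasDerivAt (fun t : ℝ => e^2+t^2+cc) (2*y) y := by
      have := (((hasDerivAt_pow 2 y).const_add (e^2)).add_const cc)
      exact this.congr_deriv (by push_cast; ring)
    have h2 : HasDerivAt (fun t : ℝ => 3*e^2-t^2-cc) (-2*y) y := by
      have := (((hasDerivAt_pow 2 y).const_sub (3*e^2)).sub_const cc)
      exact this.congr_deriv (by push_cast; ring)
    have h3 : HasDerivAt (fun t : ℝ => (3*e^2-t^2-cc)^2)
        (2*(3*e^2-y^2-cc)^1*(-2*y)) y := by
      exact (h2.pow 2).congr_deriv (by push_cast; ring)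
    have := h1.mul h3
    exact this.congr_deriv (by push_cast; ring)
  have hden : (e^2+y^2+cc)*(3*e^2-y^2-cc)^2 ≠ 0 := by
    have : (0:ℝ) < (e^2+y^2+cc)*(3*e^2-y^2-cc)^2 := by rw [hs, hdd2]; positivity
    exact this.ne'
  erw [(hN.div hD hden).deriv]
  apply transfer hq hdd
  · rw [hs, hdd2]; ring_nf; exact le_refl _
  · have hP1 : |(e^2+y^2+cc)*(3*e^2-y^2-cc)^2| ≤ q^2*dd^2 := by
      rw [abs_mul, abs_of_nonneg (by positivity), abs_of_nonneg (sq_nonneg _), hs, hdd2]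
    have hN1 : |4*e*(3*y^2+cc*1)| ≤ (4*q)*(4*q^2) := by
      refine prodb (absc (by norm_num) he) ?_
      calc |3*y^2+cc*1| ≤ |3*y^2| + |cc*1| := abs_add_le _ _
        _ ≤ 3*q^2 + q^2*1 := add_le_add (absc (by norm_num) hy2) (prodb hcq (by norm_num))
        _ = 4*q^2 := by ring
    have hN0 : |4*e*(y^3+cc*y)| ≤ (4*q)*(2*(q^2*q)) := by
      refine prodb (absc (by norm_num) he) ?_
      calc |y^3+cc*y| ≤ |y^3| + |cc*y| := abs_add_le _ _
        _ ≤ q^2*q + q^2*q := add_le_add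
            (by rw [show y^3 = y^2*y by ring]; exact prodb hy2 hy)
            (prodb hcq hy)
        _ = 2*(q^2*q) := by ring
    have hyd : |y*(3*e^2-y^2-cc)| ≤ q*dd := prodb hy (le_of_eq hd)
    have hD' : |2*y*(3*e^2-y^2-cc)^2 + (e^2+y^2+cc)*(2*(3*e^2-y^2-cc)*(-2*y))|
        ≤ 2*(q*dd^2) + q^2*(4*(q*dd)) := by
      refine (abs_add_le _ _).trans (add_le_add ?_ ?_)
      · rw [show (2:ℝ)*y*(3*e^2-y^2-cc)^2 = 2*(y*(3*e^2-y^2-cc)^2) by ring]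
        refine absc (by norm_num) (prodb hy ?_)
        rw [abs_of_nonneg (sq_nonneg _), hdd2]
      · refine prodb ?_ ?_
        · rw [abs_of_nonneg (by positivity), hs]
        · rw [show (2:ℝ)*(3*e^2-y^2-cc)*(-2*y) = -(4*(y*(3*e^2-y^2-cc))) by ring,
            abs_neg]
          exact absc (by norm_num) hyd
    calc |4*e*(3*y^2+cc*1) * ((e^2+y^2+cc)*(3*e^2-y^2-cc)^2)
          - 4*e*(y^3+cc*y) * (2*y*(3*e^2-y^2-cc)^2 + (e^2+y^2+cc)*(2*(3*e^2-y^2-cc)*(-2*y)))|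
        ≤ ((4*q)*(4*q^2))*(q^2*dd^2) + ((4*q)*(2*(q^2*q)))*(2*(q*dd^2) + q^2*(4*(q*dd))) :=
          (abs_sub _ _).trans (add_le_add (prodb hN1 hP1) (prodb hN0 hD'))
      _ ≤ 1000 * (q^5*dd^2 + q^7*dd) := by
          nlinarith [mul_nonneg (pow_nonneg hq.le 5) (pow_nonneg hdd.le 2),
            mul_nonneg (pow_nonneg hq.le 7) hdd.le]

lemma derivY2 {e cc q dd : ℝ} (y : ℝ) (hcc : 0 ≤ cc) (hq : 0 < q) (hdd : 0 < dd)
    (hs : e^2 + y^2 + cc = q^2) (hd : |3*e^2 - y^2 - cc| = dd) :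
    |deriv (fun t : ℝ => 2*((t^2+cc)*(3*e^2+t^2+cc)) / (3*((e^2+t^2+cc)*(3*e^2-t^2-cc)^2))) y|
      ≤ 1000 * (q * (dd^2)⁻¹ + q^3 * (dd^3)⁻¹) := by
  have hy : |y| ≤ q := by nlinarith [sq_abs y, abs_nonneg y, sq_nonneg e]
  have hy2 : |y^2| ≤ q^2 := by
    rw [abs_of_nonneg (sq_nonneg _)]; nlinarith [sq_nonneg e]
  have hcq : |cc| ≤ q^2 := by
    rw [abs_of_nonneg hcc]; nlinarith [sq_nonneg e, sq_nonneg y]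
  have hy2c : |y^2+cc| ≤ q^2 := by
    rw [abs_of_nonneg (by positivity)]; nlinarith [sq_nonneg e]
  have h3e : |3*e^2+y^2+cc| ≤ 3*q^2 := by
    rw [abs_of_nonneg (by positivity)]; nlinarith [sq_nonneg e, sq_nonneg y]
  have hdd2 : (3*e^2-y^2-cc)^2 = dd^2 := by rw [← hd, sq_abs]
  have hN : HasDerivAt (fun t : ℝ => 2*((t^2+cc)*(3*e^2+t^2+cc)))
      (2*(2*y*(3*e^2+y^2+cc) + (y^2+cc)*(2*y))) y := by
    have h1 : HasDerivAt (fun t : ℝ => t^2+cc) (2*y) y := by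
      simpa using (hasDerivAt_pow 2 y).add_const cc
    have h2 : HasDerivAt (fun t : ℝ => 3*e^2+t^2+cc) (2*y) y := by
      have := (((hasDerivAt_pow 2 y).const_add (3*e^2)).add_const cc)
      exact this.congr_deriv (by push_cast; ring)
    have := (h1.mul h2).const_mul 2
    exact this.congr_deriv (by push_cast; ring)
  have hD : HasDerivAt (fun t : ℝ => 3*((e^2+t^2+cc)*(3*e^2-t^2-cc)^2))
      (3*(2*y*(3*e^2-y^2-cc)^2 + (e^2+y^2+cc)*(2*(3*e^2-y^2-cc)*(-2*y)))) y := by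
    have h1 : HasDerivAt (fun t : ℝ => e^2+t^2+cc) (2*y) y := by
      have := (((hasDerivAt_pow 2 y).const_add (e^2)).add_const cc)
      exact this.congr_deriv (by push_cast; ring)
    have h2 : HasDerivAt (fun t : ℝ => 3*e^2-t^2-cc) (-2*y) y := by
      have := (((hasDerivAt_pow 2 y).const_sub (3*e^2)).sub_const cc)
      exact this.congr_deriv (by push_cast; ring)
    have h3 : HasDerivAt (fun t : ℝ => (3*e^2-t^2-cc)^2)
        (2*(3*e^2-y^2-cc)^1*(-2*y)) y := by
      exact (h2.pow 2).congr_deriv (by push_cast; ring)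
    have := (h1.mul h3).const_mul 3
    exact this.congr_deriv (by push_cast; ring)
  have hden : 3*((e^2+y^2+cc)*(3*e^2-y^2-cc)^2) ≠ 0 := by
    have : (0:ℝ) < 3*((e^2+y^2+cc)*(3*e^2-y^2-cc)^2) := by rw [hs, hdd2]; positivity
    exact this.ne'
  erw [(hN.div hD hden).deriv]
  apply transfer hq hdd
  · rw [hs, hdd2]; nlinarith [mul_nonneg (pow_nonneg hq.le 4) (pow_nonneg hdd.le 4)]
  · have hP1 : |3*((e^2+y^2+cc)*(3*e^2-y^2-cc)^2)| ≤ 3*(q^2*dd^2) := by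
      refine absc (by norm_num) ?_
      rw [abs_mul, abs_of_nonneg (by positivity), abs_of_nonneg (sq_nonneg _), hs, hdd2]
    have hN1 : |2*(2*y*(3*e^2+y^2+cc) + (y^2+cc)*(2*y))| ≤ 2*((2*q)*(3*q^2) + q^2*(2*q)) := by
      refine absc (by norm_num) ?_
      refine (abs_add_le _ _).trans (add_le_add ?_ ?_)
      · rw [show (2:ℝ)*y*(3*e^2+y^2+cc) = (2*y)*(3*e^2+y^2+cc) by ring]
        exact prodb (absc (by norm_num) hy) h3e
      · exact prodb hy2c (absc (by norm_num) hy)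
    have hN0 : |2*((y^2+cc)*(3*e^2+y^2+cc))| ≤ 2*(q^2*(3*q^2)) := by
      exact absc (by norm_num) (prodb hy2c h3e)
    have hyd : |y*(3*e^2-y^2-cc)| ≤ q*dd := prodb hy (le_of_eq hd)
    have hD' : |3*(2*y*(3*e^2-y^2-cc)^2 + (e^2+y^2+cc)*(2*(3*e^2-y^2-cc)*(-2*y)))|
        ≤ 3*(2*(q*dd^2) + q^2*(4*(q*dd))) := by
      refine absc (by norm_num) ?_
      refine (abs_add_le _ _).trans (add_le_add ?_ ?_)
      · rw [show (2:ℝ)*y*(3*e^2-y^2-cc)^2 = 2*(y*(3*e^2-y^2-cc)^2) by ring]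
        refine absc (by norm_num) (prodb hy ?_)
        rw [abs_of_nonneg (sq_nonneg _), hdd2]
      · refine prodb ?_ ?_
        · rw [abs_of_nonneg (by positivity), hs]
        · rw [show (2:ℝ)*(3*e^2-y^2-cc)*(-2*y) = -(4*(y*(3*e^2-y^2-cc))) by ring,
            abs_neg]
          exact absc (by norm_num) hyd
    calc |2*(2*y*(3*e^2+y^2+cc) + (y^2+cc)*(2*y)) * (3*((e^2+y^2+cc)*(3*e^2-y^2-cc)^2))
          - 2*((y^2+cc)*(3*e^2+y^2+cc))
            * (3*(2*y*(3*e^2-y^2-cc)^2 + (e^2+y^2+cc)*(2*(3*e^2-y^2-cc)*(-2*y))))|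
        ≤ (2*((2*q)*(3*q^2) + q^2*(2*q)))*(3*(q^2*dd^2))
            + (2*(q^2*(3*q^2)))*(3*(2*(q*dd^2) + q^2*(4*(q*dd)))) :=
          (abs_sub _ _).trans (add_le_add (prodb hN1 hP1) (prodb hN0 hD'))
      _ ≤ 1000 * (q^5*dd^2 + q^7*dd) := by
          nlinarith [mul_nonneg (pow_nonneg hq.le 5) (pow_nonneg hdd.le 2),
            mul_nonneg (pow_nonneg hq.le 7) hdd.le]

set_option maxHeartbeats 2000000 in
/-- Bounds on B_{j,k} and on ∂_{η_j}B_{j,k} for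
(j,k) ∈ {(1,1),(1,2),(1,3),(2,1),(2,2),(3,1),(3,2)}. -/
theorem Bjk_bounds :
    ∃ C > 0, ∀ η₁ η₂ η₃ : ℝ, ¬(η₁ = 0 ∧ η₂ = 0 ∧ η₃ = 0) →
      3 * η₁ ^ 2 ≠ η₂ ^ 2 + η₃ ^ 2 →
      (|B11ZK η₁ η₂ η₃| ≤ C * (η₁ ^ 2 + η₂ ^ 2 + η₃ ^ 2)
          * ((3 * η₁ ^ 2 - η₂ ^ 2 - η₃ ^ 2) ^ 2)⁻¹) ∧
      (|B12ZK η₁ η₂ η₃| ≤ C * (η₁ ^ 2 + η₂ ^ 2 + η₃ ^ 2)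
          * ((3 * η₁ ^ 2 - η₂ ^ 2 - η₃ ^ 2) ^ 2)⁻¹) ∧
      (|B13ZK η₁ η₂ η₃| ≤ C * (η₁ ^ 2 + η₂ ^ 2 + η₃ ^ 2)
          * ((3 * η₁ ^ 2 - η₂ ^ 2 - η₃ ^ 2) ^ 2)⁻¹) ∧
      (|B21ZK η₁ η₂ η₃| ≤ C * (η₁ ^ 2 + η₂ ^ 2 + η₃ ^ 2)
          * ((3 * η₁ ^ 2 - η₂ ^ 2 - η₃ ^ 2) ^ 2)⁻¹) ∧
      (|B22ZK η₁ η₂ η₃| ≤ C * (η₁ ^ 2 + η₂ ^ 2 + η₃ ^ 2)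
          * ((3 * η₁ ^ 2 - η₂ ^ 2 - η₃ ^ 2) ^ 2)⁻¹) ∧
      (|B31ZK η₁ η₂ η₃| ≤ C * (η₁ ^ 2 + η₂ ^ 2 + η₃ ^ 2)
          * ((3 * η₁ ^ 2 - η₂ ^ 2 - η₃ ^ 2) ^ 2)⁻¹) ∧
      (|B32ZK η₁ η₂ η₃| ≤ C * (η₁ ^ 2 + η₂ ^ 2 + η₃ ^ 2)
          * ((3 * η₁ ^ 2 - η₂ ^ 2 - η₃ ^ 2) ^ 2)⁻¹) ∧
      (|deriv (fun s => B11ZK s η₂ η₃) η₁|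
          ≤ C * ((η₁ ^ 2 + η₂ ^ 2 + η₃ ^ 2) ^ ((1 : ℝ) / 2)
                  * ((3 * η₁ ^ 2 - η₂ ^ 2 - η₃ ^ 2) ^ 2)⁻¹
              + (η₁ ^ 2 + η₂ ^ 2 + η₃ ^ 2) ^ ((3 : ℝ) / 2)
                  * (|3 * η₁ ^ 2 - η₂ ^ 2 - η₃ ^ 2| ^ 3)⁻¹)) ∧
      (|deriv (fun s => B12ZK s η₂ η₃) η₁|
          ≤ C * ((η₁ ^ 2 + η₂ ^ 2 + η₃ ^ 2) ^ ((1 : ℝ) / 2)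
                  * ((3 * η₁ ^ 2 - η₂ ^ 2 - η₃ ^ 2) ^ 2)⁻¹
              + (η₁ ^ 2 + η₂ ^ 2 + η₃ ^ 2) ^ ((3 : ℝ) / 2)
                  * (|3 * η₁ ^ 2 - η₂ ^ 2 - η₃ ^ 2| ^ 3)⁻¹)) ∧
      (|deriv (fun s => B13ZK s η₂ η₃) η₁|
          ≤ C * ((η₁ ^ 2 + η₂ ^ 2 + η₃ ^ 2) ^ ((1 : ℝ) / 2)
                  * ((3 * η₁ ^ 2 - η₂ ^ 2 - η₃ ^ 2) ^ 2)⁻¹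
              + (η₁ ^ 2 + η₂ ^ 2 + η₃ ^ 2) ^ ((3 : ℝ) / 2)
                  * (|3 * η₁ ^ 2 - η₂ ^ 2 - η₃ ^ 2| ^ 3)⁻¹)) ∧
      (|deriv (fun s => B21ZK η₁ s η₃) η₂|
          ≤ C * ((η₁ ^ 2 + η₂ ^ 2 + η₃ ^ 2) ^ ((1 : ℝ) / 2)
                  * ((3 * η₁ ^ 2 - η₂ ^ 2 - η₃ ^ 2) ^ 2)⁻¹
              + (η₁ ^ 2 + η₂ ^ 2 + η₃ ^ 2) ^ ((3 : ℝ) / 2)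
                  * (|3 * η₁ ^ 2 - η₂ ^ 2 - η₃ ^ 2| ^ 3)⁻¹)) ∧
      (|deriv (fun s => B22ZK η₁ s η₃) η₂|
          ≤ C * ((η₁ ^ 2 + η₂ ^ 2 + η₃ ^ 2) ^ ((1 : ℝ) / 2)
                  * ((3 * η₁ ^ 2 - η₂ ^ 2 - η₃ ^ 2) ^ 2)⁻¹
              + (η₁ ^ 2 + η₂ ^ 2 + η₃ ^ 2) ^ ((3 : ℝ) / 2)
                  * (|3 * η₁ ^ 2 - η₂ ^ 2 - η₃ ^ 2| ^ 3)⁻¹)) ∧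
      (|deriv (fun s => B31ZK η₁ η₂ s) η₃|
          ≤ C * ((η₁ ^ 2 + η₂ ^ 2 + η₃ ^ 2) ^ ((1 : ℝ) / 2)
                  * ((3 * η₁ ^ 2 - η₂ ^ 2 - η₃ ^ 2) ^ 2)⁻¹
              + (η₁ ^ 2 + η₂ ^ 2 + η₃ ^ 2) ^ ((3 : ℝ) / 2)
                  * (|3 * η₁ ^ 2 - η₂ ^ 2 - η₃ ^ 2| ^ 3)⁻¹)) ∧
      (|deriv (fun s => B32ZK η₁ η₂ s) η₃|
          ≤ C * ((η₁ ^ 2 + η₂ ^ 2 + η₃ ^ 2) ^ ((1 : ℝ) / 2)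
                  * ((3 * η₁ ^ 2 - η₂ ^ 2 - η₃ ^ 2) ^ 2)⁻¹
              + (η₁ ^ 2 + η₂ ^ 2 + η₃ ^ 2) ^ ((3 : ℝ) / 2)
                  * (|3 * η₁ ^ 2 - η₂ ^ 2 - η₃ ^ 2| ^ 3)⁻¹)) := by
  refine ⟨1000, by norm_num, ?_⟩
  intro η₁ η₂ η₃ h0 hne
  have hs : 0 < η₁^2+η₂^2+η₃^2 := by
    by_contra hc
    push_neg at hc
    refine h0 ⟨?_, ?_, ?_⟩ <;>
      [ (have h : η₁^2 = 0 := le_antisymm (by nlinarith [sq_nonneg η₂, sq_nonneg η₃]) (sq_nonneg _));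
        (have h : η₂^2 = 0 := le_antisymm (by nlinarith [sq_nonneg η₁, sq_nonneg η₃]) (sq_nonneg _));
        (have h : η₃^2 = 0 := le_antisymm (by nlinarith [sq_nonneg η₁, sq_nonneg η₂]) (sq_nonneg _))] <;>
      exact pow_eq_zero_iff (by norm_num) |>.mp h
  have hdne : 3*η₁^2-η₂^2-η₃^2 ≠ 0 := fun h => hne (by linarith)
  have hdd : 0 < |3*η₁^2-η₂^2-η₃^2| := abs_pos.mpr hdne
  have hd2 : 0 < (3*η₁^2-η₂^2-η₃^2)^2 := by
    rw [← sq_abs]; exact pow_pos hdd 2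
  have hq : 0 < Real.sqrt (η₁^2+η₂^2+η₃^2) := Real.sqrt_pos.mpr hs
  have hq2 : η₁^2+η₂^2+η₃^2 = (Real.sqrt (η₁^2+η₂^2+η₃^2))^2 := (Real.sq_sqrt hs.le).symm
  have h12 : (η₁^2+η₂^2+η₃^2) ^ ((1:ℝ)/2) = Real.sqrt (η₁^2+η₂^2+η₃^2) :=
    (Real.sqrt_eq_rpow _).symm
  have h32 : (η₁^2+η₂^2+η₃^2) ^ ((3:ℝ)/2) = (Real.sqrt (η₁^2+η₂^2+η₃^2))^3 := by
    rw [show ((3:ℝ)/2) = (1/2)*3 by norm_num, Real.rpow_mul hs.le, Real.sqrt_eq_rpow]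
    rw [← Real.rpow_natCast ((η₁^2+η₂^2+η₃^2) ^ ((1:ℝ)/2)) 3, Nat.cast_ofNat]
  have habs1 : |η₁| ≤ Real.sqrt (η₁^2+η₂^2+η₃^2) := by
    nlinarith [sq_abs η₁, abs_nonneg η₁, sq_nonneg η₂, sq_nonneg η₃]
  have habs2 : |η₂| ≤ Real.sqrt (η₁^2+η₂^2+η₃^2) := by
    nlinarith [sq_abs η₂, abs_nonneg η₂, sq_nonneg η₁, sq_nonneg η₃]
  have habs3 : |η₃| ≤ Real.sqrt (η₁^2+η₂^2+η₃^2) := by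
    nlinarith [sq_abs η₃, abs_nonneg η₃, sq_nonneg η₁, sq_nonneg η₂]
  have hP3 : (η₁^2+η₂^2+η₃^2) * (3*η₁^2-η₂^2-η₃^2)^2
      ≤ 3*((η₁^2+η₂^2+η₃^2) * (3*η₁^2-η₂^2-η₃^2)^2) := by
    nlinarith [mul_nonneg hs.le hd2.le]
  refine ⟨?_, ?_, ?_, ?_, ?_, ?_, ?_, ?_, ?_, ?_, ?_, ?_, ?_, ?_⟩
  -- B11 bound
  · simp only [B11ZK, pZK]
    refine transfer0 hs hd2 (le_refl _) ?_
    rw [abs_of_nonneg (by positivity)]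
    nlinarith [sq_nonneg (η₁^2-η₂^2-η₃^2), sq_nonneg η₁, sq_nonneg η₂, sq_nonneg η₃,
      mul_nonneg (sq_nonneg η₁) (sq_nonneg η₂), mul_nonneg (sq_nonneg η₁) (sq_nonneg η₃),
      mul_nonneg (sq_nonneg η₂) (sq_nonneg η₃)]
  -- B12 bound
  · simp only [B12ZK, pZK]
    refine transfer0 hs hd2 hP3 ?_
    have hT : (0:ℝ) ≤ 3*η₁^2+η₂^2+η₃^2 := by positivity
    rw [abs_le]
    constructor <;>
      nlinarith [mul_nonneg (sq_nonneg (η₁-η₂)) hT, mul_nonneg (sq_nonneg (η₁+η₂)) hT,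
        mul_nonneg (sq_nonneg η₁) (sq_nonneg η₂), mul_nonneg (sq_nonneg η₁) (sq_nonneg η₃),
        mul_nonneg (sq_nonneg η₂) (sq_nonneg η₃), sq_nonneg (η₁^2), sq_nonneg (η₂^2),
        sq_nonneg (η₃^2)]
  -- B13 bound
  · simp only [B13ZK, pZK]
    refine transfer0 hs hd2 hP3 ?_
    have hT : (0:ℝ) ≤ 3*η₁^2+η₂^2+η₃^2 := by positivity
    rw [abs_le]
    constructor <;>
      nlinarith [mul_nonneg (sq_nonneg (η₁-η₃)) hT, mul_nonneg (sq_nonneg (η₁+η₃)) hT,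
        mul_nonneg (sq_nonneg η₁) (sq_nonneg η₂), mul_nonneg (sq_nonneg η₁) (sq_nonneg η₃),
        mul_nonneg (sq_nonneg η₂) (sq_nonneg η₃), sq_nonneg (η₁^2), sq_nonneg (η₂^2),
        sq_nonneg (η₃^2)]
  -- B21 bound
  · simp only [B21ZK, pZK]
    refine transfer0 hs hd2 (le_refl _) ?_
    have hT : (0:ℝ) ≤ η₂^2+η₃^2 := by positivity
    rw [abs_le]
    constructor <;>
      nlinarith [mul_nonneg (sq_nonneg (η₁-η₂)) hT, mul_nonneg (sq_nonneg (η₁+η₂)) hT,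
        mul_nonneg (sq_nonneg η₁) (sq_nonneg η₂), mul_nonneg (sq_nonneg η₁) (sq_nonneg η₃),
        mul_nonneg (sq_nonneg η₂) (sq_nonneg η₃), sq_nonneg (η₁^2), sq_nonneg (η₂^2),
        sq_nonneg (η₃^2)]
  -- B22 bound
  · simp only [B22ZK, pZK]
    refine transfer0 hs hd2 hP3 ?_
    rw [abs_of_nonneg (by positivity)]
    nlinarith [mul_nonneg (sq_nonneg η₁) (sq_nonneg η₂), mul_nonneg (sq_nonneg η₁) (sq_nonneg η₃),
      mul_nonneg (sq_nonneg η₂) (sq_nonneg η₃), sq_nonneg (η₁^2), sq_nonneg (η₂^2),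
      sq_nonneg (η₃^2)]
  -- B31 bound
  · simp only [B31ZK, pZK]
    refine transfer0 hs hd2 (le_refl _) ?_
    have hT : (0:ℝ) ≤ η₂^2+η₃^2 := by positivity
    rw [abs_le]
    constructor <;>
      nlinarith [mul_nonneg (sq_nonneg (η₁-η₃)) hT, mul_nonneg (sq_nonneg (η₁+η₃)) hT,
        mul_nonneg (sq_nonneg η₁) (sq_nonneg η₂), mul_nonneg (sq_nonneg η₁) (sq_nonneg η₃),
        mul_nonneg (sq_nonneg η₂) (sq_nonneg η₃), sq_nonneg (η₁^2), sq_nonneg (η₂^2),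
        sq_nonneg (η₃^2)]
  -- B32 bound
  · simp only [B32ZK, pZK]
    refine transfer0 hs hd2 hP3 ?_
    rw [abs_of_nonneg (by positivity)]
    nlinarith [mul_nonneg (sq_nonneg η₁) (sq_nonneg η₂), mul_nonneg (sq_nonneg η₁) (sq_nonneg η₃),
      mul_nonneg (sq_nonneg η₂) (sq_nonneg η₃), sq_nonneg (η₁^2), sq_nonneg (η₂^2),
      sq_nonneg (η₃^2)]
  -- deriv B11
  · have hfeq : (fun t : ℝ => B11ZK t η₂ η₃)
        = (fun t : ℝ => 4*t^2*(η₂^2+η₃^2)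
            / ((t^2+(η₂^2+η₃^2))*(3*t^2-(η₂^2+η₃^2))^2)) := by
      funext t; simp only [B11ZK, pZK]; congr 1 <;> ring
    rw [hfeq, h12, h32, ← sq_abs (3*η₁^2-η₂^2-η₃^2)]
    exact derivX1 η₁ (by positivity) hq hdd (by linarith)
      (by rw [show 3*η₁^2 - (η₂^2+η₃^2) = 3*η₁^2-η₂^2-η₃^2 by ring])
  -- deriv B12
  · have hfeq : (fun t : ℝ => B12ZK t η₂ η₃)
        = (fun t : ℝ => 2*η₂*(3*t^3+(η₂^2+η₃^2)*t)
            / (3*((t^2+(η₂^2+η₃^2))*(3*t^2-(η₂^2+η₃^2))^2))) := by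
      funext t; simp only [B12ZK, pZK]; congr 1 <;> ring
    rw [hfeq, h12, h32, ← sq_abs (3*η₁^2-η₂^2-η₃^2)]
    exact derivX2 η₁ (by positivity) hq hdd (by linarith)
      (by rw [show 3*η₁^2 - (η₂^2+η₃^2) = 3*η₁^2-η₂^2-η₃^2 by ring]) habs2
  -- deriv B13
  · have hfeq : (fun t : ℝ => B13ZK t η₂ η₃)
        = (fun t : ℝ => 2*η₃*(3*t^3+(η₂^2+η₃^2)*t)
            / (3*((t^2+(η₂^2+η₃^2))*(3*t^2-(η₂^2+η₃^2))^2))) := by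
      funext t; simp only [B13ZK, pZK]; congr 1 <;> ring
    rw [hfeq, h12, h32, ← sq_abs (3*η₁^2-η₂^2-η₃^2)]
    exact derivX2 η₁ (by positivity) hq hdd (by linarith)
      (by rw [show 3*η₁^2 - (η₂^2+η₃^2) = 3*η₁^2-η₂^2-η₃^2 by ring]) habs3
  -- deriv B21
  · have hfeq : (fun t : ℝ => B21ZK η₁ t η₃)
        = (fun t : ℝ => 4*η₁*(t^3+η₃^2*t)
            / ((η₁^2+t^2+η₃^2)*(3*η₁^2-t^2-η₃^2)^2)) := by
      funext t; simp only [B21ZK, pZK]; congr 1 <;> ring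
    rw [hfeq, h12, h32, ← sq_abs (3*η₁^2-η₂^2-η₃^2)]
    exact derivY1 η₂ (sq_nonneg η₃) hq hdd hq2 rfl
  -- deriv B22
  · have hfeq : (fun t : ℝ => B22ZK η₁ t η₃)
        = (fun t : ℝ => 2*((t^2+η₃^2)*(3*η₁^2+t^2+η₃^2))
            / (3*((η₁^2+t^2+η₃^2)*(3*η₁^2-t^2-η₃^2)^2))) := by
      funext t; simp only [B22ZK, pZK]; congr 1 <;> ring
    rw [hfeq, h12, h32, ← sq_abs (3*η₁^2-η₂^2-η₃^2)]
    exact derivY2 η₂ (sq_nonneg η₃) hq hdd hq2 rfl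
  -- deriv B31
  · have hfeq : (fun t : ℝ => B31ZK η₁ η₂ t)
        = (fun t : ℝ => 4*η₁*(t^3+η₂^2*t)
            / ((η₁^2+t^2+η₂^2)*(3*η₁^2-t^2-η₂^2)^2)) := by
      funext t; simp only [B31ZK, pZK]; congr 1 <;> ring
    rw [hfeq, h12, h32, ← sq_abs (3*η₁^2-η₂^2-η₃^2)]
    exact derivY1 η₃ (sq_nonneg η₂) hq hdd (by linarith)
      (by rw [show 3*η₁^2 - η₃^2 - η₂^2 = 3*η₁^2-η₂^2-η₃^2 by ring])
  -- deriv B32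
  · have hfeq : (fun t : ℝ => B32ZK η₁ η₂ t)
        = (fun t : ℝ => 2*((t^2+η₂^2)*(3*η₁^2+t^2+η₂^2))
            / (3*((η₁^2+t^2+η₂^2)*(3*η₁^2-t^2-η₂^2)^2))) := by
      funext t; simp only [B32ZK, pZK]; congr 1 <;> ring
    rw [hfeq, h12, h32, ← sq_abs (3*η₁^2-η₂^2-η₃^2)]
    exact derivY2 η₃ (sq_nonneg η₂) hq hdd (by linarith)
      (by rw [show 3*η₁^2 - η₃^2 - η₂^2 = 3*η₁^2-η₂^2-η₃^2 by ring])
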